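/- Let σ ⊂ ℝ^m be an empty lattice simplex of dimension d. Then there is no y ∈ M*(σ) with rdeg y = d. -/

import Mathlib

open Set

noncomputable section

/-- Lift a point of `ℝ^m` to height 1 in `ℝ^(m+1)`. -/
def lift {m : ℕ} (x : Fin m → ℝ) : Fin (m + 1) → ℝ := Fin.snoc x 1

/-- A point with integer coordinates (a lattice point). -/
def isLat {n : ℕ} (x : Fin n → ℝ) : Prop := ∀ i, ∃ z : ℤ, x i = (z : ℝ)

/-- The cone `C(P)` generated by `P × {1}` (for convex `P`). -/
def coneOf {m : ℕ} (P : Set (Fin m → ℝ)) : Set (Fin (m + 1) → ℝ) :=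
  {y | ∃ (c : ℝ) (p : Fin m → ℝ), 0 ≤ c ∧ p ∈ P ∧ y = c • lift p}

/-- The semigroup `M(P)` generated by the lattice points of `P × {1}`. -/
def Msemi {m : ℕ} (P : Set (Fin m → ℝ)) : AddSubmonoid (Fin (m + 1) → ℝ) :=
  AddSubmonoid.closure {y | ∃ p ∈ P, isLat p ∧ y = lift p}

/-- `M*(P)`: the lattice points in the relative interior of `C(P)`. -/
def Mstar {m : ℕ} (P : Set (Fin m → ℝ)) : Set (Fin (m + 1) → ℝ) :=
  {y | y ∈ intrinsicInterior ℝ (coneOf P) ∧ isLat y}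

/-- The degree: the last coordinate. -/
def deg {m : ℕ} (y : Fin (m + 1) → ℝ) : ℝ := y (Fin.last m)

/-- The reduced `P`-degree of `y`. -/
def rdeg {m : ℕ} (P : Set (Fin m → ℝ)) (y : Fin (m + 1) → ℝ) : ℝ :=
  sInf {r | ∃ z w, z ∈ Mstar P ∧ w ∈ Msemi P ∧ y = z + w ∧ r = deg z}

/-- An empty lattice simplex: its only lattice points are its vertices. -/
def IsEmptyLatticeSimplex {m : ℕ} (s : Set (Fin m → ℝ)) : Prop :=
  ∃ (k : ℕ) (x : Fin (k + 1) → (Fin m → ℝ)), AffineIndependent ℝ x ∧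
    (∀ i, isLat (x i)) ∧ s = convexHull ℝ (Set.range x) ∧
    (∀ p ∈ s, isLat p → p ∈ Set.range x)

/-- A lattice triangulation of `P`: a finite face-closed family of empty lattice
simplices covering `P`, with pairwise disjoint relative interiors (every point of `P`
lies in the relative interior of exactly one simplex), and using every lattice point
of `P` as a vertex. -/
structure IsLatticeTriangulation {m : ℕ} (P : Set (Fin m → ℝ))
    (T : Set (Set (Fin m → ℝ))) : Prop where
  finite : T.Finite
  simplex : ∀ s ∈ T, IsEmptyLatticeSimplex s
  subset : ∀ s ∈ T, s ⊆ P
  partition : ∀ p ∈ P, ∃! s, s ∈ T ∧ p ∈ intrinsicInterior ℝ s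
  vertex : ∀ p ∈ P, isLat p → {p} ∈ T

section aux
variable {m d : ℕ} {x : Fin (d + 1) → (Fin m → ℝ)}

lemma lift_sum (w : Fin (d+1) → ℝ) (hw : ∑ i, w i = 1) :
    lift (∑ i, w i • x i) = ∑ i, w i • lift (x i) := by
  funext j
  induction j using Fin.lastCases with
  | last => simp [lift, Fin.snoc_last, Finset.sum_apply, hw]
  | cast j => simp [lift, Fin.snoc_castSucc, Finset.sum_apply]

lemma mem_hull_iff (p : Fin m → ℝ) :
    p ∈ convexHull ℝ (Set.range x) ↔
      ∃ w : Fin (d+1) → ℝ, (∀ i, 0 ≤ w i) ∧ ∑ i, w i = 1 ∧ p = ∑ i, w i • x i := by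
  constructor
  · intro hp
    rw [convexHull_range_eq_exists_affineCombination] at hp
    obtain ⟨s, w, hw0, hw1, hwc⟩ := hp
    refine ⟨fun i => if i ∈ s then w i else 0, fun i => ?_, ?_, ?_⟩
    · dsimp only; split
      · exact hw0 _ ‹_›
      · exact le_refl 0
    · rw [Finset.sum_ite_mem, Finset.univ_inter, hw1]
    · rw [← hwc, Finset.affineCombination_eq_linear_combination s x w hw1]
      simp only [ite_smul, zero_smul]
      rw [Finset.sum_ite_mem, Finset.univ_inter]
  · rintro ⟨w, h0, h1, rfl⟩
    exact (convex_convexHull ℝ _).sum_mem (fun i _ => h0 i) h1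
      (fun i _ => subset_convexHull ℝ _ (mem_range_self i))


lemma cone_mem_iff (z : Fin (m+1) → ℝ) :
    z ∈ coneOf (convexHull ℝ (Set.range x)) ↔
      ∃ q : Fin (d+1) → ℝ, (∀ i, 0 ≤ q i) ∧ z = ∑ i, q i • lift (x i) := by
  constructor
  · rintro ⟨c, p, hc, hp, rfl⟩
    obtain ⟨w, h0, h1, rfl⟩ := mem_hull_iff p |>.mp hp
    refine ⟨fun i => c * w i, fun i => mul_nonneg hc (h0 i), ?_⟩
    rw [lift_sum w h1, Finset.smul_sum]
    exact Finset.sum_congr rfl fun i _ => (smul_smul c (w i) _)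
  · rintro ⟨q, h0, rfl⟩
    by_cases h : ∑ i, q i = 0
    · have hq : ∀ i ∈ Finset.univ, q i = 0 :=
        (Finset.sum_eq_zero_iff_of_nonneg (fun i _ => h0 i)).mp h
      refine ⟨0, x 0, le_refl 0, subset_convexHull ℝ _ (mem_range_self 0), ?_⟩
      rw [Finset.sum_congr rfl fun i hi => by rw [hq i hi, zero_smul]]
      simp
    · have hc : 0 < ∑ i, q i :=
        lt_of_le_of_ne (Finset.sum_nonneg fun i _ => h0 i) (Ne.symm h)
      have h1 : ∑ i, q i / (∑ j, q j) = 1 := by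
        rw [← Finset.sum_div, div_self h]
      refine ⟨∑ i, q i, ∑ i, (q i / ∑ j, q j) • x i, hc.le,
        (mem_hull_iff _).mpr ⟨_, fun i => div_nonneg (h0 i) hc.le, h1, rfl⟩, ?_⟩
      rw [lift_sum _ h1, Finset.smul_sum]
      refine Finset.sum_congr rfl fun i _ => ?_
      rw [smul_smul, mul_div_cancel₀ _ h]

lemma coeff_unique (hx : AffineIndependent ℝ x) {q q' : Fin (d+1) → ℝ}
    (h : ∑ i, q i • lift (x i) = ∑ i, q' i • lift (x i)) : q = q' := by
  have hslast : ∑ i, q i = ∑ i, q' i := by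
    have h3 := congrFun h (Fin.last m)
    simpa [lift, Finset.sum_apply, Fin.snoc_last] using h3
  have h2 : ∑ i, (q i - q' i) • x i = 0 := by
    funext j
    have h3 := congrFun h (Fin.castSucc j)
    simp only [Finset.sum_apply, Pi.smul_apply, smul_eq_mul, lift, Fin.snoc_castSucc] at h3
    simp only [Finset.sum_apply, Pi.smul_apply, smul_eq_mul, Pi.zero_apply, sub_mul,
      Finset.sum_sub_distrib, h3, sub_self]
  have h4 := affineIndependent_iff.mp hx Finset.univ (fun i => q i - q' i)
    (by rw [Finset.sum_sub_distrib, hslast, sub_self]) h2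
  funext i
  have := h4 i (Finset.mem_univ i)
  linarith

end aux

section aux2
variable {m d : ℕ} {x : Fin (d + 1) → (Fin m → ℝ)}

lemma exists_dual (hx : AffineIndependent ℝ x) :
    ∃ f : Fin (d+1) → ((Fin (m+1) → ℝ) →ₗ[ℝ] ℝ),
      ∀ i j, f i (lift (x j)) = if i = j then 1 else 0 := by
  set T : (Fin (d+1) → ℝ) →ₗ[ℝ] (Fin (m+1) → ℝ) :=
    Fintype.linearCombination ℝ (fun i => lift (x i)) with hT
  have hTapp : ∀ c : Fin (d+1) → ℝ, T c = ∑ i, c i • lift (x i) := fun c =>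
    Fintype.linearCombination_apply ℝ (fun i => lift (x i)) c
  have hker : LinearMap.ker T = ⊥ := by
    rw [LinearMap.ker_eq_bot']
    intro c hc
    have h0 : ∑ i, c i • lift (x i) = ∑ i, (0:ℝ) • lift (x i) := by
      rw [← hTapp, hc]; simp
    have := coeff_unique hx h0
    funext i; exact congrFun this i
  obtain ⟨g, hg⟩ := T.exists_leftInverse_of_injective hker
  refine ⟨fun i => (LinearMap.proj i).comp g, ?_⟩
  intro i j
  have hXj : T (Pi.single j 1) = lift (x j) := by
    rw [hTapp]
    simp [Pi.single_apply, ite_smul]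
  have hgX : g (lift (x j)) = Pi.single j 1 := by
    rw [← hXj]
    exact LinearMap.ext_iff.mp hg (Pi.single j 1)
  simp [LinearMap.comp_apply, hgX, Pi.single_apply]

end aux2

section aux3
variable {m d : ℕ} {x : Fin (d + 1) → (Fin m → ℝ)}

lemma relint_pos (hx : AffineIndependent ℝ x) {z : Fin (m+1) → ℝ}
    (hz : z ∈ intrinsicInterior ℝ (coneOf (convexHull ℝ (Set.range x)))) :
    ∃ q : Fin (d+1) → ℝ, (∀ i, 0 < q i) ∧ z = ∑ i, q i • lift (x i) := by
  set C := coneOf (convexHull ℝ (Set.range x)) with hC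
  obtain ⟨y', hy', hy'z⟩ := mem_intrinsicInterior.mp hz
  have hzC : z ∈ C := intrinsicInterior_subset hz
  obtain ⟨q, hq0, hzq⟩ := (cone_mem_iff z).mp hzC
  have h0C : (0 : Fin (m+1) → ℝ) ∈ C :=
    ⟨0, x 0, le_refl 0, subset_convexHull ℝ _ (mem_range_self 0), by simp⟩
  refine ⟨q, fun i => ?_, hzq⟩
  have hmem : ∀ t : ℝ, z - t • lift (x i) ∈ affineSpan ℝ C := by
    intro t
    have h1 : lift (x i) -ᵥ (0 : Fin (m+1) → ℝ) ∈ (affineSpan ℝ C).direction :=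
      AffineSubspace.vsub_mem_direction (subset_affineSpan ℝ C ⟨1, x i, zero_le_one,
        subset_convexHull ℝ _ (mem_range_self i), (one_smul ℝ _).symm⟩)
        (subset_affineSpan ℝ C h0C)
    have h2 : (-t) • (lift (x i) -ᵥ (0 : Fin (m+1) → ℝ)) ∈ (affineSpan ℝ C).direction :=
      Submodule.smul_mem _ _ h1
    have h3 := AffineSubspace.vadd_mem_of_mem_direction h2 (subset_affineSpan ℝ C hzC)
    convert h3 using 1
    simp only [vsub_eq_sub, vadd_eq_add, sub_zero]
    module
  have hgc : Continuous (fun t : ℝ => (⟨z - t • lift (x i), hmem t⟩ : affineSpan ℝ C)) := by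
    refine Continuous.subtype_mk ?_ _
    exact continuous_const.sub (continuous_id.smul continuous_const)
  have hopen : IsOpen ((fun t : ℝ => (⟨z - t • lift (x i), hmem t⟩ : affineSpan ℝ C)) ⁻¹'
      (interior ((↑) ⁻¹' C : Set (affineSpan ℝ C)))) := isOpen_interior.preimage hgc
  have h0m : (0:ℝ) ∈ ((fun t : ℝ => (⟨z - t • lift (x i), hmem t⟩ : affineSpan ℝ C)) ⁻¹'
      (interior ((↑) ⁻¹' C : Set (affineSpan ℝ C)))) := by
    have he : (⟨z - (0:ℝ) • lift (x i), hmem 0⟩ : affineSpan ℝ C) = y' :=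
      Subtype.ext (by rw [hy'z]; simp)
    rw [mem_preimage, he]
    exact hy'
  obtain ⟨ε, hε, hball⟩ := Metric.isOpen_iff.mp hopen 0 h0m
  have hεm : (ε/2) ∈ Metric.ball (0:ℝ) ε := by
    rw [Metric.mem_ball, Real.dist_eq]
    rw [abs_of_nonneg (by linarith)]
    linarith
  have hC2 : z - (ε/2) • lift (x i) ∈ C := by
    have h6 := hball hεm
    rw [mem_preimage] at h6
    have h7 := interior_subset h6
    exact h7
  obtain ⟨q', hq'0, hq'⟩ := (cone_mem_iff _).mp hC2
  have hz2 : z = ∑ j, (q' j + if j = i then ε/2 else 0) • lift (x j) := by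
    simp only [add_smul, Finset.sum_add_distrib, ← hq', ite_smul, zero_smul,
      Finset.sum_ite_eq', Finset.mem_univ, if_true]
    abel
  have hqe := coeff_unique hx (hzq.symm.trans hz2)
  have hqi := congrFun hqe i
  simp only [if_true, eq_self_iff_true] at hqi
  have := hq'0 i
  rw [hqi]
  linarith

lemma pos_mem_relint (hx : AffineIndependent ℝ x) {q : Fin (d+1) → ℝ} (hq : ∀ i, 0 < q i) :
    (∑ i, q i • lift (x i)) ∈ intrinsicInterior ℝ (coneOf (convexHull ℝ (Set.range x))) := by
  set C := coneOf (convexHull ℝ (Set.range x)) with hC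
  obtain ⟨f, hf⟩ := exists_dual hx
  have hfc : ∀ i, Continuous (f i) := fun i => (f i).continuous_of_finiteDimensional
  have happ : ∀ (c : Fin (d+1) → ℝ) i, f i (∑ j, c j • lift (x j)) = c i := by
    intro c i
    rw [map_sum]
    simp only [LinearMap.map_smul, smul_eq_mul, hf, mul_ite, mul_one, mul_zero,
      Finset.sum_ite_eq, Finset.mem_univ, if_true]
  have hspan : ∀ v ∈ affineSpan ℝ C,
      v ∈ Submodule.span ℝ (Set.range fun i => lift (x i)) := by
    intro v hv
    have hle : affineSpan ℝ C ≤
        (Submodule.span ℝ (Set.range fun i => lift (x i))).toAffineSubspace := by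
      rw [affineSpan_le]
      rintro u hu
      obtain ⟨c, hc0, rfl⟩ := (cone_mem_iff u).mp hu
      exact Submodule.sum_mem _ fun i _ =>
        Submodule.smul_mem _ _ (Submodule.subset_span (mem_range_self i))
    exact hle hv
  have hmemC : (∑ i, q i • lift (x i)) ∈ C := (cone_mem_iff _).mpr ⟨q, fun i => (hq i).le, rfl⟩
  have hmemA : (∑ i, q i • lift (x i)) ∈ affineSpan ℝ C := subset_affineSpan ℝ C hmemC
  rw [mem_intrinsicInterior]
  refine ⟨⟨_, hmemA⟩, ?_, rfl⟩
  rw [mem_interior]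
  refine ⟨((↑) : affineSpan ℝ C → (Fin (m+1) → ℝ)) ⁻¹' (⋂ i, (f i) ⁻¹' Ioi 0), ?_, ?_, ?_⟩
  · rintro ⟨v, hv⟩ hvO
    simp only [mem_preimage, mem_iInter] at hvO
    obtain ⟨c, hcv⟩ := (Submodule.mem_span_range_iff_exists_fun ℝ).mp (hspan v hv)
    have hcpos : ∀ i, 0 < c i := by
      intro i
      have h5 := hvO i
      rw [← hcv, happ] at h5
      exact h5
    show v ∈ C
    exact (cone_mem_iff v).mpr ⟨c, fun i => (hcpos i).le, hcv.symm⟩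
  · exact (isOpen_iInter_of_finite fun i =>
      (isOpen_Ioi).preimage (hfc i)).preimage continuous_subtype_val
  · simp only [mem_preimage, mem_iInter]
    intro i
    show f i (∑ j, q j • lift (x j)) ∈ Ioi 0
    rw [happ]
    exact hq i

end aux3

section latt
variable {m d : ℕ} {x : Fin (d + 1) → (Fin m → ℝ)}

lemma isLat_lift {p : Fin m → ℝ} (hp : isLat p) : isLat (lift p) := by
  intro j
  induction j using Fin.lastCases with
  | last => exact ⟨1, by simp [lift]⟩
  | cast j => obtain ⟨a, ha⟩ := hp j; exact ⟨a, by simp [lift, ha]⟩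

lemma isLat_sub {a b : Fin (m+1) → ℝ} (ha : isLat a) (hb : isLat b) : isLat (a - b) := by
  intro j
  obtain ⟨u, hu⟩ := ha j
  obtain ⟨v, hv⟩ := hb j
  exact ⟨u - v, by simp [Pi.sub_apply, hu, hv]⟩

end latt

/-- for an empty lattice `d`-simplex, no `y ∈ M*(σ)` has `rdeg y = d`. -/
theorem stmt3 {m d : ℕ} (σ : Set (Fin m → ℝ)) (x : Fin (d + 1) → (Fin m → ℝ))
    (hx : AffineIndependent ℝ x) (hxlat : ∀ i, isLat (x i))
    (hσ : σ = convexHull ℝ (Set.range x))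
    (hempty : ∀ p ∈ σ, isLat p → p ∈ Set.range x) :
    ∀ y ∈ Mstar σ, rdeg σ y ≠ d := by
  subst hσ
  intro y hy hrd
  set S : Set ℝ := {r | ∃ z w, z ∈ Mstar (convexHull ℝ (Set.range x)) ∧
      w ∈ Msemi (convexHull ℝ (Set.range x)) ∧ y = z + w ∧ r = deg z} with hS
  have hrdS : sInf S = (d : ℝ) := hrd
  have hySmem : deg y ∈ S := ⟨y, 0, hy, zero_mem _, (add_zero y).symm, rfl⟩
  have hlat_deg : ∀ r ∈ S, (∃ n : ℤ, r = n) ∧ 1 ≤ r := by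
    rintro r ⟨z, w, hz, hw, hyzw, rfl⟩
    obtain ⟨q, hq, hzq⟩ := relint_pos hx hz.1
    have hdeg : deg z = ∑ i, q i := by
      rw [hzq]; simp [deg, lift, Finset.sum_apply, Fin.snoc_last]
    refine ⟨hz.2 (Fin.last m), ?_⟩
    have hpos : 0 < deg z := by
      rw [hdeg]; exact Finset.sum_pos (fun i _ => hq i) Finset.univ_nonempty
    obtain ⟨n, hn⟩ := hz.2 (Fin.last m)
    have hn' : deg z = (n : ℝ) := hn
    have h0n : (0:ℝ) < (n:ℝ) := hn' ▸ hpos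
    have h1n : (1:ℤ) ≤ n := by exact_mod_cast h0n
    rw [hn']
    exact_mod_cast h1n
  have hbdd : BddBelow S := ⟨1, fun r hr => (hlat_deg r hr).2⟩
  have hlb : ∀ r ∈ S, (d:ℝ) ≤ r := fun r hr => hrdS ▸ csInf_le hbdd hr
  obtain ⟨r, hrS, hrlt⟩ := exists_lt_of_csInf_lt ⟨_, hySmem⟩
    (show sInf S < (d:ℝ) + 1 by rw [hrdS]; linarith)
  obtain ⟨⟨n, rfl⟩, -⟩ := hlat_deg r hrS
  have hnd : (n : ℝ) = (d : ℝ) := by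
    have h1 : (d:ℝ) ≤ (n:ℝ) := hlb _ hrS
    have h1' : (d:ℤ) ≤ n := by exact_mod_cast h1
    have h2' : n < (d:ℤ) + 1 := by exact_mod_cast hrlt
    have : n = (d:ℤ) := by omega
    exact_mod_cast congrArg (Int.cast : ℤ → ℝ) this
  obtain ⟨z, w, hzM, hwM, hyzw, hdegz⟩ := hrS
  obtain ⟨q, hqpos, hzq⟩ := relint_pos hx hzM.1
  have hdeg : deg z = ∑ i, q i := by
    rw [hzq]; simp [deg, lift, Finset.sum_apply, Fin.snoc_last]
  have hzd : deg z = (d:ℝ) := by rw [← hdegz]; exact hnd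
  have hsumq : ∑ i, q i = (d:ℝ) := by rw [← hdeg]; exact hzd
  by_cases hcase : ∃ k, 1 < q k
  · obtain ⟨k, hk⟩ := hcase
    have hz' : z - lift (x k) = ∑ i, (q i - if i = k then 1 else 0) • lift (x i) := by
      simp only [sub_smul, Finset.sum_sub_distrib, ← hzq, ite_smul, one_smul, zero_smul,
        Finset.sum_ite_eq', Finset.mem_univ, if_true]
    have hq'pos : ∀ i, 0 < q i - if i = k then 1 else 0 := by
      intro i
      by_cases hik : i = k
      · rw [if_pos hik, hik]; linarith
      · rw [if_neg hik]; simpa using hqpos i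
    have hmem : (z - lift (x k)) ∈ Mstar (convexHull ℝ (Set.range x)) := by
      constructor
      · rw [hz']; exact pos_mem_relint hx hq'pos
      · exact isLat_sub hzM.2 (isLat_lift (hxlat k))
    have hwk : lift (x k) ∈ Msemi (convexHull ℝ (Set.range x)) :=
      AddSubmonoid.subset_closure ⟨x k, subset_convexHull ℝ _ (mem_range_self k), hxlat k, rfl⟩
    have hS2 : deg (z - lift (x k)) ∈ S :=
      ⟨z - lift (x k), w + lift (x k), hmem, add_mem hwM hwk, by rw [hyzw]; abel, rfl⟩
    have hzlast : z (Fin.last m) = (d:ℝ) := hzd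
    have hdeg2 : deg (z - lift (x k)) = (d:ℝ) - 1 := by
      simp [deg, Pi.sub_apply, lift, Fin.snoc_last, hzlast]
    have := hlb _ hS2
    rw [hdeg2] at this
    linarith
  · push_neg at hcase
    have hw1 : ∑ i, (1 - q i) = 1 := by
      rw [Finset.sum_sub_distrib, hsumq]
      simp [Finset.card_univ]
    have hpσ : (∑ i, (1 - q i) • x i) ∈ convexHull ℝ (Set.range x) :=
      (mem_hull_iff _).mpr ⟨_, fun i => by linarith [hcase i], hw1, rfl⟩
    have hplat : isLat (∑ i, (1 - q i) • x i) := by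
      intro j
      obtain ⟨b, hb⟩ := hzM.2 (Fin.castSucc j)
      choose a ha using fun i => hxlat i j
      refine ⟨(∑ i, a i) - b, ?_⟩
      have e1 : ∑ i, q i * x i j = z (Fin.castSucc j) := by
        rw [hzq]; simp [Finset.sum_apply, lift, Fin.snoc_castSucc]
      have e2 : (∑ i, (1 - q i) • x i) j = ∑ i, (1 - q i) * x i j := by
        simp [Finset.sum_apply]
      have e3 : ∑ i, (1 - q i) * x i j = ∑ i, x i j - ∑ i, q i * x i j := by
        rw [← Finset.sum_sub_distrib]
        exact Finset.sum_congr rfl fun i _ => by ring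
      have e4 : ∑ i, x i j = ((∑ i, a i : ℤ) : ℝ) := by
        push_cast
        exact Finset.sum_congr rfl fun i _ => ha i
      rw [e2, e3, e4, e1, hb]
      push_cast
      ring
    obtain ⟨j0, hj0⟩ := hempty _ hpσ hplat
    have hliftp : lift (∑ i, (1 - q i) • x i) = ∑ i, (1 - q i) • lift (x i) :=
      lift_sum _ hw1
    have hliftj : lift (x j0) = ∑ i, (if i = j0 then (1:ℝ) else 0) • lift (x i) := by
      simp only [ite_smul, one_smul, zero_smul, Finset.sum_ite_eq', Finset.mem_univ, if_true]
    have hkey : ∑ i, (1 - q i) • lift (x i) = ∑ i, (if i = j0 then (1:ℝ) else 0) • lift (x i) := by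
      rw [← hliftp, ← hliftj, hj0]
    have hqe := coeff_unique hx hkey
    have hq0 := congrFun hqe j0
    simp at hq0
    have := hqpos j0
    linarith
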